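/- Assume no cycle in the original DSR graph D contains a bispecies production edge. Then all cycles in D are s-cycles if and only if all cycles in the modified DSR graph D̃ are s-cycles. -/

import Mathlib

/-- A reaction network on `n` species: `R` indexes the reaction nodes
(a reversible pair of reactions counts as one node), `src r`/`tgt r` are the
reactant/product stoichiometric vectors, and `rev r` records reversibility.
Generalized inflows/outflows are assumed not to be included in `R`. -/
structure Net (n : ℕ) where
  R : Type
  src : R → Fin n → ℕ
  tgt : R → Fin n → ℕ
  rev : R → Prop

namespace Net

variable {n : ℕ}

/-- (N2): no one-step catalysis. -/
def noCat (N : Net n) : Prop := ∀ r i, N.src r i = 0 ∨ N.tgt r i = 0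

/-- The number of distinct reactant species of reaction `r`. -/
def numReact (N : Net n) (r : N.R) : ℕ :=
  (Finset.univ.filter fun i => N.src r i ≠ 0).card

/-- (N3): every reaction has at most two distinct reactant species. -/
def atMostTwo (N : Net n) : Prop := ∀ r, N.numReact r ≤ 2

/-- A bispecies reaction: exactly two distinct reactant species. -/
def bisp (N : Net n) (r : N.R) : Prop := N.numReact r = 2

/-- (N4): every bispecies reaction is irreversible. -/
def bispIrrev (N : Net n) : Prop := ∀ r, N.bisp r → ¬ N.rev r

/-- Species `i` is adjacent to the R-node `r` in the DSR graph. -/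
def edge (N : Net n) (i : Fin n) (r : N.R) : Prop := N.src r i ≠ 0 ∨ N.tgt r i ≠ 0

/-- The edge between `i` and `r` is directed (toward the species `i`):
the reaction is irreversible and `i` is a product species only. -/
def dir (N : Net n) (i : Fin n) (r : N.R) : Prop :=
  ¬ N.rev r ∧ N.src r i = 0 ∧ N.tgt r i ≠ 0

/-- The stoichiometric label of the edge between `i` and `r` (for a network
with no one-step catalysis at most one summand is nonzero). -/
def lab (N : Net n) (i : Fin n) (r : N.R) : ℕ := N.src r i + N.tgt r i

/-- The edges from `i` and `j` to `r` form a c-pair. -/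
def cpair (N : Net n) (r : N.R) (i j : Fin n) : Prop :=
  i ≠ j ∧ N.src r i ≠ 0 ∧ N.src r j ≠ 0

/-- Bispecies production edge: a directed edge from a bispecies R-node to one
of its product species. -/
def bpe (N : Net n) (i : Fin n) (r : N.R) : Prop := N.bisp r ∧ N.dir i r

/-- The modified network: reactions with at most one reactant species are kept,
while each bispecies reaction `y → y'` is replaced, for each reactant species
`i`, by the reaction `yᵢ·eᵢ → y' + y − yᵢ·eᵢ` (irreversible). -/
def modified (N : Net n) : Net n where
  R := {r : N.R // ¬ N.bisp r} ⊕ {p : N.R × Fin n // N.bisp p.1 ∧ N.src p.1 p.2 ≠ 0}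
  src := Sum.elim (fun r j => N.src r.1 j)
    (fun p j => if j = p.1.2 then N.src p.1.1 j else 0)
  tgt := Sum.elim (fun r j => N.tgt r.1 j)
    (fun p j => if j = p.1.2 then N.tgt p.1.1 j else N.tgt p.1.1 j + N.src p.1.1 j)
  rev := Sum.elim (fun r => N.rev r.1) (fun _ => False)

/-- The map `Φ` on R-nodes: identity on copied reactions, and each modified
reaction node is sent to the original reaction it arose from.  (On species
nodes `Φ` is the identity.) -/
def phi (N : Net n) : (N.modified).R → N.R :=
  Sum.elim (fun r => r.1) (fun p => p.1.1)

/-- A cycle in the DSR graph with `m+2` species nodes `s k` and `m+2` reaction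
nodes `r k`, traversed `s k → r k → s (k+1) → ⋯`; the traversal must be
compatible with edge orientations (directed edges point toward species, so the
edges traversed species-to-reaction must be undirected), and the cycle is
simple. -/
structure Cycle (N : Net n) (m : ℕ) where
  s : Fin (m + 2) → Fin n
  r : Fin (m + 2) → N.R
  edge_sr : ∀ k, N.edge (s k) (r k)
  undir_sr : ∀ k, ¬ N.dir (s k) (r k)
  edge_rs : ∀ k, N.edge (s (k + 1)) (r k)
  sinj : Function.Injective s
  rinj : Function.Injective r

/-- s-cycle: the alternating product/quotient of stoichiometric labels along
the cycle equals 1, i.e. the product of the labels of the species-to-reaction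
edges equals that of the reaction-to-species edges. -/
def Cycle.sCycle {N : Net n} {m : ℕ} (C : N.Cycle m) : Prop :=
  (∏ k, N.lab (C.s k) (C.r k)) = ∏ k, N.lab (C.s (k + 1)) (C.r k)

/-- The cycle contains a bispecies production edge. -/
def Cycle.hasBPE {N : Net n} {m : ℕ} (C : N.Cycle m) : Prop :=
  ∃ k, N.bpe (C.s (k + 1)) (C.r k)

/-- The edge `(i, ρ)` occurs in `C` traversed species-to-reaction. -/
def Cycle.eS {N : Net n} {m : ℕ} (C : N.Cycle m) (i : Fin n) (ρ : N.R) : Prop :=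
  ∃ k, C.s k = i ∧ C.r k = ρ

/-- The edge `(i, ρ)` occurs in `C` traversed reaction-to-species. -/
def Cycle.eR {N : Net n} {m : ℕ} (C : N.Cycle m) (i : Fin n) (ρ : N.R) : Prop :=
  ∃ k, C.s (k + 1) = i ∧ C.r k = ρ

/-- The edge `(i, ρ)` occurs in the cycle `C`. -/
def Cycle.mem {N : Net n} {m : ℕ} (C : N.Cycle m) (i : Fin n) (ρ : N.R) : Prop :=
  C.eS i ρ ∨ C.eR i ρ

/-- The edge `(i, ρ)` lies in the image under `Φ` of the cycle `C` of the
modified DSR graph. -/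
def Cycle.phiMem {N : Net n} {m : ℕ} (C : (N.modified).Cycle m) (i : Fin n)
    (ρ : N.R) : Prop :=
  ∃ k, N.phi (C.r k) = ρ ∧ (C.s k = i ∨ C.s (k + 1) = i)

/-- The image of `C` under `Φ` is a c-pair of the original DSR graph. -/
def Cycle.isCPairImage {N : Net n} {m : ℕ} (C : (N.modified).Cycle m) : Prop :=
  ∃ r i j, N.cpair r i j ∧ ∀ i' r', C.phiMem i' r' ↔ (r' = r ∧ (i' = i ∨ i' = j))

/-- A path of odd length `2t+1` in the DSR graph, with species nodes
`s 0, …, s t` and reaction nodes `r 0, …, r t`, alternating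
`s 0 – r 0 – s 1 – r 1 – ⋯ – s t – r t`; one endpoint is a species node and
the other is a reaction node. -/
structure SRPath (N : Net n) (t : ℕ) where
  s : ℕ → Fin n
  r : ℕ → N.R
  sinj : ∀ k l, k ≤ t → l ≤ t → s k = s l → k = l
  rinj : ∀ k l, k ≤ t → l ≤ t → r k = r l → k = l

/-- The edge `(i, ρ)` occurs in the path `P`. -/
def SRPath.memEdge {N : Net n} {t : ℕ} (P : N.SRPath t) (i : Fin n) (ρ : N.R) : Prop :=
  (∃ k ≤ t, P.s k = i ∧ P.r k = ρ) ∨ (∃ k < t, P.s (k + 1) = i ∧ P.r k = ρ)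

/-- The species node `i` occurs in the path `P`. -/
def SRPath.memS {N : Net n} {t : ℕ} (P : N.SRPath t) (i : Fin n) : Prop :=
  ∃ k ≤ t, P.s k = i

/-- The reaction node `ρ` occurs in the path `P`. -/
def SRPath.memR {N : Net n} {t : ℕ} (P : N.SRPath t) (ρ : N.R) : Prop :=
  ∃ k ≤ t, P.r k = ρ

/-- Two paths are vertex-disjoint. -/
def SRPath.Disjoint {N : Net n} {t1 t2 : ℕ} (P : N.SRPath t1) (Q : N.SRPath t2) : Prop :=
  (∀ i, ¬ (P.memS i ∧ Q.memS i)) ∧ ∀ ρ, ¬ (P.memR ρ ∧ Q.memR ρ)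

/-- The edge `(i, ρ)` is shared by the cycles `C1` and `C2`. -/
def sharedEdge {N : Net n} {m1 m2 : ℕ} (C1 : N.Cycle m1) (C2 : N.Cycle m2)
    (i : Fin n) (ρ : N.R) : Prop := C1.mem i ρ ∧ C2.mem i ρ

/-- Each shared edge is traversed with the same orientation by both cycles. -/
def consistent {N : Net n} {m1 m2 : ℕ} (C1 : N.Cycle m1) (C2 : N.Cycle m2) : Prop :=
  ∀ i ρ, sharedEdge C1 C2 i ρ →
    ((C1.eS i ρ ↔ C2.eS i ρ) ∧ (C1.eR i ρ ↔ C2.eR i ρ))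

/-- `C1` and `C2` have S-to-R intersection: the set of shared edges is
non-empty, orientations are consistent, and the shared edges decompose into
pairwise vertex-disjoint paths of odd length (each with one species endpoint
and one reaction endpoint) — i.e. every connected component of the
intersection is such a path. -/
def SRIntxn {N : Net n} {m1 m2 : ℕ} (C1 : N.Cycle m1) (C2 : N.Cycle m2) : Prop :=
  (∃ i ρ, sharedEdge C1 C2 i ρ) ∧ consistent C1 C2 ∧
    ∃ (ι : Type) (t : ι → ℕ) (P : (a : ι) → N.SRPath (t a)),
      (∀ i ρ, sharedEdge C1 C2 i ρ ↔ ∃ a, (P a).memEdge i ρ) ∧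
      ∀ a b, a ≠ b → (P a).Disjoint (P b)

/-- The DSR graph of `N` has an S-to-R intersection. -/
def hasSRIntxn (N : Net n) : Prop :=
  ∃ (m1 m2 : ℕ) (C1 : N.Cycle m1) (C2 : N.Cycle m2), SRIntxn C1 C2

end Net


/-! ### Auxiliary lemmas -/

private lemma fin_sub_val {q : ℕ} (x y : Fin q) :
    (x - y).val = if x.val < y.val then q - y.val + x.val else x.val - y.val := by
  have hx := x.isLt
  have hy := y.isLt
  rw [Fin.sub_def]
  show (q - y.val + x.val) % q = _
  split_ifs with h
  · exact Nat.mod_eq_of_lt (by omega)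
  · have heq : q - y.val + x.val = q + (x.val - y.val) := by omega
    rw [heq, Nat.add_mod_left]
    exact Nat.mod_eq_of_lt (by omega)

private lemma fin_arc {q : ℕ} (a x y : Fin q) (h : x ≠ y) :
    (a - x).val < (y - x).val ∨ (a - y).val < (x - y).val := by
  have ha := a.isLt
  have hx := x.isLt
  have hy := y.isLt
  have hxy : x.val ≠ y.val := Fin.val_ne_iff.mpr h
  rw [fin_sub_val, fin_sub_val, fin_sub_val, fin_sub_val]
  split_ifs <;> omega

private lemma fin_succ_ne {m : ℕ} (k : Fin (m + 2)) : k + 1 ≠ k := by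
  intro h
  have h2 : (1 : Fin (m + 2)) = 0 := add_left_cancel (a := k) (by rw [add_zero]; exact h)
  have h3 := congrArg Fin.val h2
  rw [Fin.val_one, Fin.val_zero] at h3
  exact one_ne_zero h3

private lemma fin_succ_succ_ne {m : ℕ} (hm : 1 ≤ m) (k : Fin (m + 2)) : k + 1 + 1 ≠ k := by
  intro h
  have h2 : (1 + 1 : Fin (m + 2)) = 0 :=
    add_left_cancel (a := k) (by rw [add_zero, ← add_assoc]; exact h)
  have h3 := congrArg Fin.val h2
  rw [Fin.val_add, Fin.val_one, Fin.val_zero, Nat.mod_eq_of_lt (by omega)] at h3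
  omega

private lemma phi_lab {n : ℕ} (N : Net n) (x : Fin n) (ρ : (N.modified).R) :
    (N.modified).lab x ρ = N.lab x (N.phi ρ) := by
  rcases ρ with r | p
  · rfl
  · show (if x = p.1.2 then N.src p.1.1 x else 0) +
        (if x = p.1.2 then N.tgt p.1.1 x else N.tgt p.1.1 x + N.src p.1.1 x) =
        N.src p.1.1 x + N.tgt p.1.1 x
    by_cases hx : x = p.1.2
    · rw [if_pos hx, if_pos hx]
    · rw [if_neg hx, if_neg hx]; omega

private lemma phi_edge {n : ℕ} {N : Net n} {x : Fin n} {ρ : (N.modified).R}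
    (h : (N.modified).edge x ρ) : N.edge x (N.phi ρ) := by
  rcases ρ with r | p
  · exact h
  · have h' : (if x = p.1.2 then N.src p.1.1 x else 0) ≠ 0 ∨
        (if x = p.1.2 then N.tgt p.1.1 x else N.tgt p.1.1 x + N.src p.1.1 x) ≠ 0 := h
    show N.src p.1.1 x ≠ 0 ∨ N.tgt p.1.1 x ≠ 0
    by_cases hx : x = p.1.2
    · rw [if_pos hx, if_pos hx] at h'
      exact h'
    · rw [if_neg hx, if_neg hx] at h'
      omega

private lemma split_species {n : ℕ} {N : Net n} {x : Fin n}
    {p : {p : N.R × Fin n // N.bisp p.1 ∧ N.src p.1 p.2 ≠ 0}}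
    (he : (N.modified).edge x (Sum.inr p))
    (hu : ¬ (N.modified).dir x (Sum.inr p)) : x = p.1.2 := by
  by_contra hx
  apply hu
  have he' : (if x = p.1.2 then N.src p.1.1 x else 0) ≠ 0 ∨
      (if x = p.1.2 then N.tgt p.1.1 x else N.tgt p.1.1 x + N.src p.1.1 x) ≠ 0 := he
  rw [if_neg hx, if_neg hx] at he'
  refine ⟨not_false, ?_, ?_⟩
  · show (if x = p.1.2 then N.src p.1.1 x else 0) = 0
    rw [if_neg hx]
  · show (if x = p.1.2 then N.tgt p.1.1 x else N.tgt p.1.1 x + N.src p.1.1 x) ≠ 0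
    rw [if_neg hx]
    exact he'.resolve_left (fun hh => hh rfl)

private lemma phi_undir {n : ℕ} {N : Net n} {x : Fin n} {ρ : (N.modified).R}
    (he : (N.modified).edge x ρ) (hu : ¬ (N.modified).dir x ρ) :
    ¬ N.dir x (N.phi ρ) := by
  rcases ρ with r | p
  · exact hu
  · have hx := split_species he hu
    rintro ⟨-, h0, -⟩
    rw [hx] at h0
    exact p.2.2 h0

private lemma src_zero_of_bisp {n : ℕ} {N : Net n} {r : N.R} {i j p : Fin n}
    (hb : N.bisp r) (hi : N.src r i ≠ 0) (hj : N.src r j ≠ 0)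
    (hij : i ≠ j) (hpi : p ≠ i) (hpj : p ≠ j) : N.src r p = 0 := by
  by_contra hp
  have hsub : ({p, i, j} : Finset (Fin n)) ⊆
      Finset.univ.filter (fun x => N.src r x ≠ 0) := by
    intro x hx
    simp only [Finset.mem_insert, Finset.mem_singleton] at hx
    rcases hx with rfl | rfl | rfl <;> simp [Finset.mem_filter, *]
  have hcard : ({p, i, j} : Finset (Fin n)).card = 3 := by
    rw [Finset.card_insert_of_notMem (by simp [hpi, hpj]),
        Finset.card_insert_of_notMem (by simp [hij]), Finset.card_singleton]
  have hle := Finset.card_le_card hsub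
  rw [hcard] at hle
  unfold Net.bisp Net.numReact at hb
  omega

/-- Master lemma: there is no closed walk in the original DSR graph (with
injective species but possibly repeating reactions) that contains a bispecies
production edge. -/
private lemma master {n : ℕ} (N : Net n)
    (hnb : ∀ (m : ℕ) (C : N.Cycle m), ¬ C.hasBPE) :
    ∀ (m : ℕ) (σ : Fin (m + 2) → Fin n) (τ : Fin (m + 2) → N.R),
      (∀ k, N.edge (σ k) (τ k)) → (∀ k, ¬ N.dir (σ k) (τ k)) →
      (∀ k, N.edge (σ (k + 1)) (τ k)) → Function.Injective σ →
      ∀ a, N.bpe (σ (a + 1)) (τ a) → False := by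
  intro m
  induction m using Nat.strong_induction_on with
  | _ m IH =>
  intro σ τ hes hus her hσ a hbpe
  by_cases hτ : Function.Injective τ
  · exact hnb m ⟨σ, τ, hes, hus, her, hσ, hτ⟩ ⟨a, hbpe⟩
  rw [Function.not_injective_iff] at hτ
  obtain ⟨a₀, b₀, hτab, hab⟩ := hτ
  have key : ∀ x y : Fin (m + 2), x ≠ y → τ x = τ y →
      (a - x).val < (y - x).val → False := by
    intro x y hxy hτxy hmem
    have hd0 : y - x ≠ 0 := sub_ne_zero.mpr (Ne.symm hxy)
    have hdval : 1 ≤ (y - x).val := by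
      rcases Nat.eq_zero_or_pos (y - x).val with h | h
      · exact absurd (by apply Fin.ext; rw [Fin.val_zero]; exact h) hd0
      · exact h
    rcases Nat.lt_or_ge (y - x).val 2 with hlt | hge
    · -- the two collision positions are adjacent; direct contradiction
      have hd1 : y - x = 1 := by
        apply Fin.ext; rw [Fin.val_one]; omega
      have hy1 : y = x + 1 := by
        have hyy : y = x + (y - x) := by abel
        rw [hd1] at hyy; exact hyy
      have he0 : a - x = 0 := by
        apply Fin.ext; rw [Fin.val_zero]; omega
      have ha0 : a = x := by
        have haa : a = x + (a - x) := by abel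
        rw [he0, add_zero] at haa; exact haa
      rw [ha0] at hbpe
      apply hus (x + 1)
      have hτ1 : τ (x + 1) = τ x := by rw [← hy1]; exact hτxy.symm
      rw [hτ1]
      exact hbpe.2
    · -- splice out an arc and recurse
      have hdlt := (y - x).isLt
      have hmlt : (y - x).val - 2 < m := by omega
      have hle : ((y - x).val - 2) + 2 ≤ m + 2 := by omega
      set m' := (y - x).val - 2 with hm'
      have hq : m' + 2 = (y - x).val := by omega
      have hstep : ∀ c : Fin (m' + 2), c.val < m' + 1 →
          x + 1 + Fin.castLE hle (c + 1) = x + 1 + Fin.castLE hle c + 1 := by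
        intro c hc
        have hcast : Fin.castLE hle (c + 1) = Fin.castLE hle c + 1 := by
          apply Fin.ext
          simp only [Fin.coe_castLE, Fin.val_add, Fin.val_one]
          rw [Nat.mod_eq_of_lt (show c.val + 1 < m' + 2 by omega),
              Nat.mod_eq_of_lt (show c.val + 1 < m + 2 by omega)]
        rw [hcast, ← add_assoc]
      have hlastf : x + 1 + Fin.castLE hle (Fin.last (m' + 1)) = y := by
        have h1 : (1 : Fin (m + 2)) + Fin.castLE hle (Fin.last (m' + 1)) = y - x := by
          apply Fin.ext
          simp only [Fin.val_add, Fin.val_one, Fin.coe_castLE, Fin.val_last]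
          rw [Nat.mod_eq_of_lt (by omega)]
          omega
        calc x + 1 + Fin.castLE hle (Fin.last (m' + 1))
            = x + ((1 : Fin (m + 2)) + Fin.castLE hle (Fin.last (m' + 1))) := by
              rw [add_assoc]
          _ = x + (y - x) := by rw [h1]
          _ = y := by abel
      have hzerof : x + 1 + Fin.castLE hle (0 : Fin (m' + 2)) = x + 1 := by
        rw [Fin.castLE_zero, add_zero]
      have hfinj : Function.Injective
          (fun c : Fin (m' + 2) => x + 1 + Fin.castLE hle c) := by
        intro c c' hcc
        exact Fin.castLE_injective hle (add_left_cancel hcc)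
      have her' : ∀ c : Fin (m' + 2),
          N.edge (σ (x + 1 + Fin.castLE hle (c + 1))) (τ (x + 1 + Fin.castLE hle c)) := by
        intro c
        rcases Nat.lt_or_ge c.val (m' + 1) with hc | hc
        · rw [hstep c hc]; exact her _
        · have hceq : c = Fin.last (m' + 1) := by
            apply Fin.ext
            rw [Fin.val_last]
            have := c.isLt
            omega
          rw [hceq, Fin.last_add_one, hzerof, hlastf, ← hτxy]
          exact her x
      have hσ' : Function.Injective
          (fun c : Fin (m' + 2) => σ (x + 1 + Fin.castLE hle c)) :=
        fun c c' hcc => hfinj (hσ hcc)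
      obtain ⟨cc, hcc⟩ : ∃ cc : Fin (m' + 2),
          N.bpe (σ (x + 1 + Fin.castLE hle (cc + 1))) (τ (x + 1 + Fin.castLE hle cc)) := by
        by_cases he0 : a - x = 0
        · refine ⟨Fin.last (m' + 1), ?_⟩
          have hax : a = x := by
            have haa : a = x + (a - x) := by abel
            rw [he0, add_zero] at haa; exact haa
          rw [Fin.last_add_one, hzerof, hlastf, ← hτxy]
          rw [hax] at hbpe
          exact hbpe
        · have hav : 1 ≤ (a - x).val := by
            rcases Nat.eq_zero_or_pos (a - x).val with h | h
            · exact absurd (by apply Fin.ext; rw [Fin.val_zero]; exact h) he0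
            · exact h
          have hmem' := hmem
          have hcclt : (a - x).val - 1 < m' + 2 := by omega
          refine ⟨⟨(a - x).val - 1, hcclt⟩, ?_⟩
          have h1lt : ((⟨(a - x).val - 1, hcclt⟩ : Fin (m' + 2)) : ℕ) < m' + 1 := by
            show (a - x).val - 1 < m' + 1
            omega
          have hfc : x + 1 + Fin.castLE hle ⟨(a - x).val - 1, hcclt⟩ = a := by
            have h1 : (1 : Fin (m + 2)) + Fin.castLE hle ⟨(a - x).val - 1, hcclt⟩
                = a - x := by
              apply Fin.ext
              simp only [Fin.val_add, Fin.val_one, Fin.coe_castLE]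
              have hplus : 1 + ((a - x).val - 1) = (a - x).val := by omega
              rw [hplus]
              exact Nat.mod_eq_of_lt (a - x).isLt
            calc x + 1 + Fin.castLE hle ⟨(a - x).val - 1, hcclt⟩
                = x + ((1 : Fin (m + 2)) + Fin.castLE hle ⟨(a - x).val - 1, hcclt⟩) := by
                  rw [add_assoc]
              _ = x + (a - x) := by rw [h1]
              _ = a := by abel
          rw [hstep _ h1lt, hfc]
          exact hbpe
      exact IH m' hmlt (fun c => σ (x + 1 + Fin.castLE hle c))
        (fun c => τ (x + 1 + Fin.castLE hle c))
        (fun c => hes _) (fun c => hus _) her' hσ' cc hcc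
  rcases fin_arc a a₀ b₀ hab with h | h
  · exact key a₀ b₀ hab hτab h
  · exact key b₀ a₀ (Ne.symm hab) hτab.symm h

/-- If a cycle of the modified DSR graph has two distinct R-nodes mapping to
the same reaction under `Φ`, and the cycle is not the canonical 2-cycle
through a c-pair, we get a contradiction with the no-BPE hypothesis. -/
private lemma collision_false {n : ℕ} {N : Net n} (h4 : N.bispIrrev)
    (hnb : ∀ (m : ℕ) (C : N.Cycle m), ¬ C.hasBPE)
    {m : ℕ} (Ct : (N.modified).Cycle m) {k l : Fin (m + 2)}
    (hkl : k ≠ l) (hφ : N.phi (Ct.r k) = N.phi (Ct.r l)) (hlk : l + 1 ≠ k) :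
    False := by
  have hne : Ct.r k ≠ Ct.r l := fun h => hkl (Ct.rinj h)
  rcases hrk : Ct.r k with rk | pk <;> rcases hrl : Ct.r l with rl | pl <;>
    rw [hrk, hrl] at hφ hne
  · have h1 : rk.1 = rl.1 := hφ
    exact hne (congrArg Sum.inl (Subtype.ext h1))
  · have h1 : rk.1 = pl.1.1 := hφ
    exact rk.2 (by rw [h1]; exact pl.2.1)
  · have h1 : pk.1.1 = rl.1 := hφ
    exact rl.2 (h1 ▸ pk.2.1)
  · have hr : pk.1.1 = pl.1.1 := hφ
    have hij : pk.1.2 ≠ pl.1.2 := by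
      intro h
      exact hne (congrArg Sum.inr (Subtype.ext (Prod.ext hr h)))
    have hek := Ct.edge_sr k; rw [hrk] at hek
    have huk := Ct.undir_sr k; rw [hrk] at huk
    have hsk : Ct.s k = pk.1.2 := split_species hek huk
    have hel := Ct.edge_sr l; rw [hrl] at hel
    have hul := Ct.undir_sr l; rw [hrl] at hul
    have hsl : Ct.s l = pl.1.2 := split_species hel hul
    have hp1 : Ct.s (l + 1) ≠ pk.1.2 := by
      intro h
      exact hlk (Ct.sinj (h.trans hsk.symm))
    have hp2 : Ct.s (l + 1) ≠ pl.1.2 := by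
      intro h
      exact fin_succ_ne l (Ct.sinj (h.trans hsl.symm))
    have herl := Ct.edge_rs l; rw [hrl] at herl
    have herl' : (if Ct.s (l + 1) = pl.1.2 then N.src pl.1.1 (Ct.s (l + 1)) else 0) ≠ 0 ∨
        (if Ct.s (l + 1) = pl.1.2 then N.tgt pl.1.1 (Ct.s (l + 1))
          else N.tgt pl.1.1 (Ct.s (l + 1)) + N.src pl.1.1 (Ct.s (l + 1))) ≠ 0 := herl
    rw [if_neg hp2, if_neg hp2] at herl'
    have hts : N.tgt pl.1.1 (Ct.s (l + 1)) + N.src pl.1.1 (Ct.s (l + 1)) ≠ 0 :=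
      herl'.resolve_left (fun hh => hh rfl)
    have hsrc0 : N.src pl.1.1 (Ct.s (l + 1)) = 0 := by
      refine src_zero_of_bisp pl.2.1 (i := pk.1.2) (j := pl.1.2) ?_ pl.2.2 hij hp1 hp2
      rw [← hr]; exact pk.2.2
    have htgt : N.tgt pl.1.1 (Ct.s (l + 1)) ≠ 0 := by omega
    have hbpe : N.bpe (Ct.s (l + 1)) (N.phi (Ct.r l)) := by
      rw [hrl]
      exact ⟨pl.2.1, h4 _ pl.2.1, hsrc0, htgt⟩
    exact master N hnb m Ct.s (fun c => N.phi (Ct.r c))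
      (fun c => phi_edge (Ct.edge_sr c))
      (fun c => phi_undir (Ct.edge_sr c) (Ct.undir_sr c))
      (fun c => phi_edge (Ct.edge_rs c)) Ct.sinj l hbpe

/-- Assume no cycle of the original DSR graph contains a bispecies production
edge.  Then all cycles of the original DSR graph are s-cycles iff all cycles
of the modified DSR graph are s-cycles. -/
theorem stmt_14 {n : ℕ} (N : Net n) (h2 : N.noCat) (h3 : N.atMostTwo)
    (h4 : N.bispIrrev) (hnb : ∀ (m : ℕ) (C : N.Cycle m), ¬ C.hasBPE) :
    (∀ (m : ℕ) (C : N.Cycle m), C.sCycle) ↔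
      ∀ (m : ℕ) (Ct : (N.modified).Cycle m), Ct.sCycle := by
  constructor
  · -- original s-cycles ⇒ modified s-cycles
    intro hyp m Ct
    by_cases hinj : Function.Injective (fun c => N.phi (Ct.r c))
    · -- the image is a genuine cycle of the original DSR graph
      have hC : (∏ c, N.lab (Ct.s c) (N.phi (Ct.r c))) =
          ∏ c, N.lab (Ct.s (c + 1)) (N.phi (Ct.r c)) :=
        hyp m ⟨Ct.s, fun c => N.phi (Ct.r c),
          fun c => phi_edge (Ct.edge_sr c),
          fun c => phi_undir (Ct.edge_sr c) (Ct.undir_sr c),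
          fun c => phi_edge (Ct.edge_rs c), Ct.sinj, hinj⟩
      show (∏ c, (N.modified).lab (Ct.s c) (Ct.r c)) =
        ∏ c, (N.modified).lab (Ct.s (c + 1)) (Ct.r c)
      simp only [phi_lab]
      exact hC
    · -- Φ collapses two reaction nodes: the image is a c-pair
      rw [Function.not_injective_iff] at hinj
      obtain ⟨k, l, hφ, hkl⟩ := hinj
      rcases Nat.eq_zero_or_pos m with rfl | hm
      · -- the 2-cycle through a c-pair is automatically an s-cycle
        have hall : ∀ x : Fin (0 + 2), N.phi (Ct.r x) = N.phi (Ct.r k) := by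
          intro x
          rcases eq_or_ne x k with rfl | hx
          · rfl
          · have hxl : x = l := by
              have h1 := x.isLt
              have h2 := k.isLt
              have h3 := l.isLt
              have h5 : x.val ≠ k.val := Fin.val_ne_iff.mpr hx
              have h6 : k.val ≠ l.val := Fin.val_ne_iff.mpr hkl
              exact Fin.ext (by omega)
            rw [hxl]
            exact hφ.symm
        show (∏ c, (N.modified).lab (Ct.s c) (Ct.r c)) =
          ∏ c, (N.modified).lab (Ct.s (c + 1)) (Ct.r c)
        simp only [phi_lab, hall]
        show (∏ c : Fin 2, N.lab (Ct.s c) (N.phi (Ct.r k))) =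
          ∏ c : Fin 2, N.lab (Ct.s (c + 1)) (N.phi (Ct.r k))
        rw [Fin.prod_univ_two, Fin.prod_univ_two,
          show ((0 : Fin 2) + 1) = 1 by decide, show ((1 : Fin 2) + 1) = 0 by decide]
        exact mul_comm _ _
      · -- a longer cycle through a collapsed pair would yield a BPE cycle
        exfalso
        by_cases hlk : l + 1 = k
        · have hkl1 : k + 1 ≠ l := by
            intro h
            apply fin_succ_succ_ne hm l
            rw [hlk]
            exact h
          exact collision_false h4 hnb Ct hkl.symm hφ.symm hkl1
        · exact collision_false h4 hnb Ct hkl hφ hlk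
  · -- modified s-cycles ⇒ original s-cycles: lift the cycle along Φ
    intro hyp m C
    classical
    have hsrc : ∀ k, N.bisp (C.r k) → N.src (C.r k) (C.s k) ≠ 0 := by
      intro k hb h0
      exact C.undir_sr k ⟨h4 _ hb, h0, (C.edge_sr k).resolve_left (not_not_intro h0)⟩
    have hp : ∀ j, N.phi (if h : N.bisp (C.r j) then
        (Sum.inr ⟨(C.r j, C.s j), h, hsrc j h⟩ : (N.modified).R)
        else Sum.inl ⟨C.r j, h⟩) = C.r j := by
      intro j
      by_cases h : N.bisp (C.r j)
      · exact (congrArg N.phi (dif_pos h)).trans rfl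
      · exact (congrArg N.phi (dif_neg h)).trans rfl
    have main := hyp m
      { s := C.s
        r := fun j => if h : N.bisp (C.r j) then
          (Sum.inr ⟨(C.r j, C.s j), h, hsrc j h⟩ : (N.modified).R)
          else Sum.inl ⟨C.r j, h⟩
        edge_sr := by
          intro k
          by_cases h : N.bisp (C.r k)
          · refine (congrArg (N.modified.edge (C.s k)) (dif_pos h)).mpr ?_
            refine Or.inl ?_
            show (if C.s k = C.s k then N.src (C.r k) (C.s k) else 0) ≠ 0
            rw [if_pos rfl]
            exact hsrc k h
          · refine (congrArg (N.modified.edge (C.s k)) (dif_neg h)).mpr ?_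
            exact C.edge_sr k
        undir_sr := by
          intro k
          by_cases h : N.bisp (C.r k)
          · refine (congrArg (fun x => ¬ N.modified.dir (C.s k) x) (dif_pos h)).mpr ?_
            rintro ⟨-, h0, -⟩
            have h0' : (if C.s k = C.s k then N.src (C.r k) (C.s k) else 0) = 0 := h0
            rw [if_pos rfl] at h0'
            exact hsrc k h h0'
          · refine (congrArg (fun x => ¬ N.modified.dir (C.s k) x) (dif_neg h)).mpr ?_
            exact C.undir_sr k
        edge_rs := by
          intro k
          by_cases h : N.bisp (C.r k)
          · refine (congrArg (N.modified.edge (C.s (k + 1))) (dif_pos h)).mpr ?_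
            have hnek : C.s (k + 1) ≠ C.s k := fun h => fin_succ_ne k (C.sinj h)
            refine Or.inr ?_
            show (if C.s (k + 1) = C.s k then N.tgt (C.r k) (C.s (k + 1))
              else N.tgt (C.r k) (C.s (k + 1)) + N.src (C.r k) (C.s (k + 1))) ≠ 0
            rw [if_neg hnek]
            have he := C.edge_rs k
            rcases he with h | h <;> omega
          · refine (congrArg (N.modified.edge (C.s (k + 1))) (dif_neg h)).mpr ?_
            exact C.edge_rs k
        sinj := C.sinj
        rinj := by
          intro k l h
          apply C.rinj
          have h2 := congrArg N.phi h
          rwa [hp, hp] at h2 }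
    have main' : (∏ c, (N.modified).lab (C.s c)
          (if h : N.bisp (C.r c) then
            (Sum.inr ⟨(C.r c, C.s c), h, hsrc c h⟩ : (N.modified).R)
            else Sum.inl ⟨C.r c, h⟩)) =
        ∏ c, (N.modified).lab (C.s (c + 1))
          (if h : N.bisp (C.r c) then
            (Sum.inr ⟨(C.r c, C.s c), h, hsrc c h⟩ : (N.modified).R)
            else Sum.inl ⟨C.r c, h⟩) := main
    simp only [phi_lab, hp] at main'
    exact main'
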